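/- Fix integers n, m, l, r, c ≥ 1 with r ≥ 1, let E ∈ ℝ^{n×n}, F ∈ ℝ^{n×m}, G ∈ ℝ^{n×l}, H ∈ ℝ^{m×n}, and let (x̂, u, y) be a compensator trajectory. Set Ē = E + F H. Then for every t ≥ 0 the data matrix factors as H_{r,c}(t) = [[F̄_x , F̄_y] ; [0 , I_{lr}]] · [[x̂(t), x̂(t+1), …, x̂(t+c−1)] ; [Y_r(t+1), Y_r(t+2), …, Y_r(t+c)]], where the first factor is an ((m+l)r)×(n+lr) matrix and the second is an (n+lr)×c matrix whose k-th column is (x̂(t+k) ; Y_r(t+k+1)). (Factorization of the input-output data matrix in the proof of Lemma 1.) -/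
import Mathlib


open Matrix

noncomputable section

namespace LQGPaper

variable {n m l : ℕ}

/-- Row block matrix `(E^{n-1}B, E^{n-2}B, …, B) ∈ ℝ^{n×nk}`. -/
def Frow {k : ℕ} (E : Matrix (Fin n) (Fin n) ℝ) (B : Matrix (Fin n) (Fin k) ℝ) :
    Matrix (Fin n) (Fin n × Fin k) ℝ :=
  Matrix.of fun i q => (E ^ (n - 1 - (q.1 : ℕ)) * B) i q.2

/-- Strictly block-lower-triangular matrix (`M̃_u`/`M̃_y` style) whose `(i,j)` block
(0-indexed, blocks of size `n × k`) is `E^{i-j-1} B` for `i > j` and `0` otherwise. -/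
def Mlow {k : ℕ} (E : Matrix (Fin n) (Fin n) ℝ) (B : Matrix (Fin n) (Fin k) ℝ) :
    Matrix (Fin n × Fin n) (Fin n × Fin k) ℝ :=
  Matrix.of fun p q =>
    if (q.1 : ℕ) < (p.1 : ℕ) then (E ^ ((p.1 : ℕ) - (q.1 : ℕ) - 1) * B) p.2 q.2 else 0

/-- Strictly block-lower-triangular matrix (`M_u`/`M_y` style) whose `(i,j)` block
(0-indexed, blocks of size `m × k`) is `H E^{i-j-1} B` for `i > j` and `0` otherwise. -/
def MlowH {k : ℕ} (E : Matrix (Fin n) (Fin n) ℝ) (B : Matrix (Fin n) (Fin k) ℝ)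
    (H : Matrix (Fin m) (Fin n) ℝ) :
    Matrix (Fin n × Fin m) (Fin n × Fin k) ℝ :=
  Matrix.of fun p q =>
    if (q.1 : ℕ) < (p.1 : ℕ) then (H * E ^ ((p.1 : ℕ) - (q.1 : ℕ) - 1) * B) p.2 q.2 else 0

/-- The block column `F_x = (H; HE; …; HE^{n-1}) ∈ ℝ^{mn×n}`. -/
def Fx (E : Matrix (Fin n) (Fin n) ℝ) (H : Matrix (Fin m) (Fin n) ℝ) :
    Matrix (Fin n × Fin m) (Fin n) ℝ :=
  Matrix.of fun p j => (H * E ^ (p.1 : ℕ)) p.2 j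

/-- The selection matrix `P_i = I_n ⊗ e_iᵀ ∈ ℝ^{n×nm}`. -/
def Pmat (n : ℕ) {m : ℕ} (i : Fin m) : Matrix (Fin n) (Fin n × Fin m) ℝ :=
  Matrix.of fun r q => if r = q.1 ∧ q.2 = i then 1 else 0

/-- The Kronecker product `a ⊗ I_q ∈ ℝ^{q×nq}` of a row vector `a ∈ ℝ^{1×n}`
with the identity `I_q`. -/
def aKron (a : Fin n → ℝ) (q : ℕ) : Matrix (Fin q) (Fin n × Fin q) ℝ :=
  Matrix.of fun i p => if i = p.2 then a p.1 else 0

/-- The row vector `a ∈ ℝ^{1×n}` as a `1 × n` matrix. -/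
def aRow (a : Fin n → ℝ) : Matrix (Fin 1) (Fin n) ℝ := Matrix.of fun _ k => a k

/-- The `i`-th row of `H` as a `1 × n` matrix. -/
def Hrow (H : Matrix (Fin m) (Fin n) ℝ) (i : Fin m) : Matrix (Fin 1) (Fin n) ℝ :=
  Matrix.of fun _ j => H i j

/-- The estimation matrix
`L_est = [[F_u − (a⊗I_n)M̃_u , F_y − (a⊗I_n)M̃_y]; [a⊗I_m , 0]] ∈ ℝ^{(n+m)×(m+l)n}`. -/
def Lest (E : Matrix (Fin n) (Fin n) ℝ) (F : Matrix (Fin n) (Fin m) ℝ)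
    (G : Matrix (Fin n) (Fin l) ℝ) (a : Fin n → ℝ) :
    Matrix (Fin n ⊕ Fin m) ((Fin n × Fin m) ⊕ (Fin n × Fin l)) ℝ :=
  Matrix.fromBlocks (Frow E F - aKron a n * Mlow E F) (Frow E G - aKron a n * Mlow E G)
    (aKron a m) 0

/-- A compensator trajectory: `x̂(t+1) = E x̂(t) + F u(t) + G y(t+1)`, `u(t) = H x̂(t)`. -/
def IsCompTraj (E : Matrix (Fin n) (Fin n) ℝ) (F : Matrix (Fin n) (Fin m) ℝ)
    (G : Matrix (Fin n) (Fin l) ℝ) (H : Matrix (Fin m) (Fin n) ℝ)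
    (xh : ℕ → Fin n → ℝ) (u : ℕ → Fin m → ℝ) (y : ℕ → Fin l → ℝ) : Prop :=
  (∀ t, xh (t + 1) = E.mulVec (xh t) + F.mulVec (u t) + G.mulVec (y (t + 1))) ∧
    ∀ t, u t = H.mulVec (xh t)

/-- The stacked vector `(v(t); v(t+1); …; v(t+r-1))`. -/
def stack {k : ℕ} (v : ℕ → Fin k → ℝ) (r t : ℕ) : Fin r × Fin k → ℝ :=
  fun p => v (t + (p.1 : ℕ)) p.2

/-- The block column `F̄_x = (H; HĒ; …; HĒ^{r-1}) ∈ ℝ^{mr×n}`. -/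
def ObsMat {n m : ℕ} (r : ℕ) (Eb : Matrix (Fin n) (Fin n) ℝ)
    (H : Matrix (Fin m) (Fin n) ℝ) : Matrix (Fin r × Fin m) (Fin n) ℝ :=
  Matrix.of fun p j => (H * Eb ^ (p.1 : ℕ)) p.2 j

/-- `F̄_y ∈ ℝ^{mr×lr}`: block matrix whose `(i,j)` block (0-indexed, blocks `m × l`)
is `H Ē^{i-j-1} G` for `i > j` and `0` otherwise. -/
def ToepMat {n m l : ℕ} (r : ℕ) (Eb : Matrix (Fin n) (Fin n) ℝ)
    (G : Matrix (Fin n) (Fin l) ℝ) (H : Matrix (Fin m) (Fin n) ℝ) :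
    Matrix (Fin r × Fin m) (Fin r × Fin l) ℝ :=
  Matrix.of fun p q =>
    if (q.1 : ℕ) < (p.1 : ℕ) then
      (H * Eb ^ ((p.1 : ℕ) - (q.1 : ℕ) - 1) * G) p.2 q.2
    else 0

/-- The input-output data matrix `H_{r,c}(t)` whose `k`-th column is
`(U_r(t+k); Y_r(t+k+1))`. -/
def dataMat {m l : ℕ} (u : ℕ → Fin m → ℝ) (y : ℕ → Fin l → ℝ) (r c t : ℕ) :
    Matrix ((Fin r × Fin m) ⊕ (Fin r × Fin l)) (Fin c) ℝ :=
  Matrix.of fun i k =>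
    Sum.elim (fun p : Fin r × Fin m => u (t + (k : ℕ) + (p.1 : ℕ)) p.2)
      (fun p : Fin r × Fin l => y (t + (k : ℕ) + 1 + (p.1 : ℕ)) p.2) i

/-- The matrix `N` whose `k`-th column is `(x̂(t+k); Y_r(t+k+1))`. -/
def stateMat {n l : ℕ} (xh : ℕ → Fin n → ℝ) (y : ℕ → Fin l → ℝ) (r c t : ℕ) :
    Matrix (Fin n ⊕ (Fin r × Fin l)) (Fin c) ℝ :=
  Matrix.of fun i k =>
    Sum.elim (fun j : Fin n => xh (t + (k : ℕ)) j)
      (fun p : Fin r × Fin l => y (t + (k : ℕ) + 1 + (p.1 : ℕ)) p.2) i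


lemma comp_state_formula {n m l : ℕ} (E : Matrix (Fin n) (Fin n) ℝ)
    (F : Matrix (Fin n) (Fin m) ℝ) (G : Matrix (Fin n) (Fin l) ℝ)
    (H : Matrix (Fin m) (Fin n) ℝ)
    (xh : ℕ → Fin n → ℝ) (u : ℕ → Fin m → ℝ) (y : ℕ → Fin l → ℝ)
    (htraj : IsCompTraj E F G H xh u y) (s : ℕ) : ∀ i : ℕ,
    xh (s + i) = ((E + F * H) ^ i).mulVec (xh s) +
      ∑ j ∈ Finset.range i, ((E + F * H) ^ (i - j - 1) * G).mulVec (y (s + j + 1)) := by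
  intro i
  induction i with
  | zero => simp
  | succ i ih =>
    have h1 := htraj.1 (s + i)
    have h2 := htraj.2 (s + i)
    have key : xh (s + (i + 1)) = (E + F * H).mulVec (xh (s + i)) + G.mulVec (y (s + i + 1)) := by
      rw [show s + (i + 1) = s + i + 1 by ring, h1, h2]
      simp only [Matrix.add_mulVec, Matrix.mulVec_mulVec]
    rw [key, ih, Matrix.mulVec_add, Matrix.mulVec_mulVec, Finset.sum_range_succ, ← pow_succ']
    have hs : (E + F * H) *ᵥ (∑ j ∈ Finset.range i,
        ((E + F * H) ^ (i - j - 1) * G) *ᵥ y (s + j + 1)) =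
        ∑ j ∈ Finset.range i, ((E + F * H) ^ (i + 1 - j - 1) * G) *ᵥ y (s + j + 1) := by
      rw [← Matrix.mulVecLin_apply, map_sum]
      apply Finset.sum_congr rfl
      intro j hj
      rw [Finset.mem_range] at hj
      rw [Matrix.mulVecLin_apply, Matrix.mulVec_mulVec, ← Matrix.mul_assoc, ← pow_succ',
        show i - j - 1 + 1 = i + 1 - j - 1 from by omega]
    rw [hs]
    simp only [Nat.add_sub_cancel_left, Nat.sub_self, pow_zero, Matrix.one_mul]
    abel

/-- factorization of the data matrix, proof of Lemma 1. -/
theorem data_matrix_factorization (n m l r c : ℕ)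
    (hn : 1 ≤ n) (hm : 1 ≤ m) (hl : 1 ≤ l) (hr : 1 ≤ r) (hc : 1 ≤ c)
    (E : Matrix (Fin n) (Fin n) ℝ) (F : Matrix (Fin n) (Fin m) ℝ)
    (G : Matrix (Fin n) (Fin l) ℝ) (H : Matrix (Fin m) (Fin n) ℝ)
    (xh : ℕ → Fin n → ℝ) (u : ℕ → Fin m → ℝ) (y : ℕ → Fin l → ℝ)
    (htraj : IsCompTraj E F G H xh u y) (t : ℕ) :
    dataMat u y r c t =
      Matrix.fromBlocks (ObsMat r (E + F * H) H) (ToepMat r (E + F * H) G H) 0 1 *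
        stateMat xh y r c t := by
  obtain ⟨h1, h2⟩ := htraj
  ext i k
  rcases i with ⟨p, a⟩ | ⟨q, b⟩
  · -- input block row
    rw [Matrix.mul_apply]
    rw [Fintype.sum_sum_type]
    simp only [Matrix.fromBlocks_apply₁₁, Matrix.fromBlocks_apply₁₂]
    have hx := comp_state_formula E F G H xh u y ⟨h1, h2⟩ (t + (k : ℕ)) (p : ℕ)
    show u (t + (k : ℕ) + (p : ℕ)) a = _
    rw [h2, hx]
    simp only [Matrix.mulVec, dotProduct, Pi.add_apply, mul_add,
      Finset.sum_add_distrib]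
    congr 1
    · -- observability part
      simp only [Matrix.mulVec, dotProduct, ObsMat, stateMat, Matrix.of_apply,
        Sum.elim_inl, Matrix.mul_apply, Finset.mul_sum, Finset.sum_mul]
      rw [Finset.sum_comm]
      apply Finset.sum_congr rfl
      intro j _
      apply Finset.sum_congr rfl
      intro j' _
      ring
    · -- Toeplitz part
      simp only [Finset.sum_apply, Finset.mul_sum]
      rw [Finset.sum_comm]
      have step : ∀ j' ∈ Finset.range (p : ℕ),
          (∑ x : Fin n, H a x *
            (((E + F * H) ^ ((p : ℕ) - j' - 1) * G) *ᵥ y (t + (k : ℕ) + j' + 1)) x)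
          = ((H * (E + F * H) ^ ((p : ℕ) - j' - 1) * G) *ᵥ y (t + (k : ℕ) + j' + 1)) a := by
        intro j' _
        show (H *ᵥ _) a = _
        rw [Matrix.mulVec_mulVec, ← Matrix.mul_assoc]
      rw [Finset.sum_congr rfl step]
      simp only [ToepMat, stateMat, Matrix.of_apply, Sum.elim_inr]
      rw [Fintype.sum_prod_type]
      rw [show (∑ q : Fin r, ∑ b : Fin l,
          (if (q : ℕ) < (p : ℕ) then (H * (E + F * H) ^ ((p : ℕ) - (q : ℕ) - 1) * G) a b else 0) *
            y (t + (k : ℕ) + 1 + (q : ℕ)) b) =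
          ∑ q : Fin r, (if (q : ℕ) < (p : ℕ) then
            ∑ b : Fin l, (H * (E + F * H) ^ ((p : ℕ) - (q : ℕ) - 1) * G) a b *
              y (t + (k : ℕ) + 1 + (q : ℕ)) b else 0) from
        Finset.sum_congr rfl fun q _ => by split <;> simp]
      rw [Fin.sum_univ_eq_sum_range (fun q => if q < (p : ℕ) then
            ∑ b : Fin l, (H * (E + F * H) ^ ((p : ℕ) - q - 1) * G) a b *
              y (t + (k : ℕ) + 1 + q) b else 0) r]
      rw [← Finset.sum_subset (Finset.range_subset_range.2 (le_of_lt p.isLt))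
        (fun x _ hx => by rw [Finset.mem_range, not_lt] at hx; rw [if_neg (by omega)])]
      apply Finset.sum_congr rfl
      intro j' hj'
      rw [Finset.mem_range] at hj'
      rw [if_pos hj']
      rw [show t + (k : ℕ) + 1 + j' = t + (k : ℕ) + j' + 1 by ring]
      rfl
  · -- output block row
    rw [Matrix.mul_apply, Fintype.sum_sum_type]
    simp only [Matrix.fromBlocks_apply₂₁, Matrix.fromBlocks_apply₂₂, Matrix.zero_apply,
      zero_mul, Finset.sum_const_zero, zero_add, Matrix.one_apply]
    show y (t + (k : ℕ) + 1 + (q : ℕ)) b = _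
    rw [Finset.sum_eq_single (⟨q, b⟩ : Fin r × Fin l)]
    · simp [stateMat]
    · intro c' _ hc'
      rw [if_neg (fun h => hc' h.symm), zero_mul]
    · simp


end LQGPaper
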